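/- Let Q ∈ P^G be a Bayesian network over an arbitrary directed acyclic graph G on n vertices, let Γ^L be a class of bounded measurable functions on X, let i ∈ V, and let P_{i∪Pa(i)} be any probability measure on X_{i∪Pa(i)}. With P̃ = Q_{V^{(i−1)}|Pa(i)} ⊗ P_{i∪Pa(i)} ⊗ ∏_{j=i+1}^n Q_{j|Pa(j)}, the following data-processing-type inequality holds for the Γ-IPM: W^{I_{i,Pa(i)}[Γ^L]}( Q_{i∪Pa(i)}, P_{i∪Pa(i)} ) ≥ W^{Γ^L}( Q, P̃ ). -/

import Mathlib

open MeasureTheory ProbabilityTheory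

namespace GiGAN

variable {n : ℕ}

/-- Restriction of a configuration to the coordinates in `A`. -/
def restr (X : Fin n → Type*) (A : Finset (Fin n)) (x : ∀ j, X j) : ∀ j : A, X j :=
  fun j => x j

/-- Glue a configuration on `A` with one on `Aᶜ` to a full configuration. -/
def glue (X : Fin n → Type*) (A : Finset (Fin n))
    (p : (∀ j : A, X j) × (∀ j : (Aᶜ : Finset (Fin n)), X j)) : ∀ j, X j :=
  fun j => if h : j ∈ A then p.1 ⟨j, h⟩ else p.2 ⟨j, Finset.mem_compl.mpr h⟩

/-- The family of vertex `i` : the vertex together with its parents. -/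
def fam (Pa : Fin n → Finset (Fin n)) (i : Fin n) : Finset (Fin n) := insert i (Pa i)

variable (X : Fin n → Type*) [∀ i, MeasurableSpace (X i)]

/-- Marginal of a measure on the coordinates in `A`. -/
noncomputable def marg (A : Finset (Fin n)) (Q : Measure (∀ j, X j)) :
    Measure (∀ j : A, X j) := Q.map (restr X A)

/-- Hybrid measure: the coordinates in `A` are distributed according to `Pfam` and the
remaining coordinates according to the conditional kernel `K`. -/
noncomputable def hyb (A : Finset (Fin n)) (Pfam : Measure (∀ j : A, X j))
    (K : Kernel (∀ j : A, X j) (∀ j : (Aᶜ : Finset (Fin n)), X j)) :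
    Measure (∀ j, X j) :=
  Pfam.bind fun u => (K u).map fun w => glue X A (u, w)

/-- The conditional expectation operator `I_{i,Pa(i)}`, integrating out all coordinates
outside `A = i ∪ Pa(i)` against the conditional kernel `K`. -/
noncomputable def Iop (A : Finset (Fin n))
    (K : Kernel (∀ j : A, X j) (∀ j : (Aᶜ : Finset (Fin n)), X j))
    (γ : (∀ j, X j) → ℝ) (u : ∀ j : A, X j) : ℝ :=
  ∫ w, γ (glue X A (u, w)) ∂(K u)

/-- Resample coordinate `i` from the conditional kernel given its parents. -/
noncomputable def resampleFun (Pa : Fin n → Finset (Fin n)) (i : Fin n)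
    (κ : Kernel (∀ j : (Pa i), X j) (X i)) (x : ∀ j, X j) : Measure (∀ j, X j) :=
  (κ (restr X (Pa i) x)).map fun xi => Function.update x i xi

/-- The joint law of the Bayesian network with conditional probability distributions `κ`,
obtained by ancestral sampling of the coordinates in (topological) order. -/
noncomputable def bnJoint (Pa : Fin n → Finset (Fin n))
    (κ : ∀ i, Kernel (∀ j : (Pa i), X j) (X i)) (x₀ : ∀ j, X j) :
    Measure (∀ j, X j) :=
  (List.finRange n).foldl (fun μ i => μ.bind (resampleFun X Pa i (κ i))) (Measure.dirac x₀)

/-- `P ∈ 𝒫^G` : `P` factorizes according to the DAG `G` given by the parent map `Pa`. -/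
def MemPG (Pa : Fin n → Finset (Fin n)) (P : Measure (∀ j, X j)) : Prop :=
  IsProbabilityMeasure P ∧
    ∃ κ : ∀ i, Kernel (∀ j : (Pa i), X j) (X i),
      (∀ i, IsMarkovKernel (κ i)) ∧ ∀ x₀, P = bnJoint X Pa κ x₀

/-- `Γ^L = {L·γ : γ ∈ Γ}`. -/
def scaleC {Y : Type*} (L : ℝ) (Γ : Set (Y → ℝ)) : Set (Y → ℝ) :=
  (fun γ => fun y => L * γ y) '' Γ

/-- A class of bounded measurable real-valued functions. -/
def BddMeasClass {Y : Type*} [MeasurableSpace Y] (Γ : Set (Y → ℝ)) : Prop :=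
  ∀ γ ∈ Γ, Measurable γ ∧ ∃ M, ∀ y, |γ y| ≤ M

/-- Legendre–Fenchel transform of `f : [0,∞) → ℝ`. -/
noncomputable def conj (f : ℝ → ℝ) (s : ℝ) : ℝ :=
  sSup {y | ∃ t : ℝ, 0 ≤ t ∧ y = s * t - f t}

/-- The `(f,Γ)`-divergence, in its variational form, where `fs = f*` is the
Legendre–Fenchel transform of `f`. -/
noncomputable def DfGamma {Y : Type*} [MeasurableSpace Y] (fs : ℝ → ℝ)
    (Γ : Set (Y → ℝ)) (Q P : Measure Y) : ℝ :=
  ⨆ γ ∈ Γ, (∫ y, γ y ∂Q - ⨅ ν : ℝ, (ν + ∫ y, fs (γ y - ν) ∂P))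

/-- The `Γ`-integral probability metric. -/
noncomputable def IPM {Y : Type*} [MeasurableSpace Y] (Γ : Set (Y → ℝ))
    (Q P : Measure Y) : ℝ :=
  ⨆ γ ∈ Γ, (∫ y, γ y ∂Q - ∫ y, γ y ∂P)



/-! ### Auxiliary lemmas -/

lemma measurable_restr (A : Finset (Fin n)) : Measurable (restr X A) :=
  measurable_pi_lambda _ fun _ => measurable_pi_apply _

lemma measurable_glue (A : Finset (Fin n)) : Measurable (glue X A) := by
  apply measurable_pi_lambda
  intro j
  by_cases h : j ∈ A
  · simp only [glue, dif_pos h]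
    exact (measurable_pi_apply _).comp measurable_fst
  · simp only [glue, dif_neg h]
    exact (measurable_pi_apply _).comp measurable_snd

lemma hyb_eq_map (A : Finset (Fin n)) (P : Measure (∀ j : A, X j)) [SFinite P]
    (K : Kernel (∀ j : A, X j) (∀ j : (Aᶜ : Finset (Fin n)), X j)) [IsMarkovKernel K] :
    hyb X A P K = (P ⊗ₘ K).map (glue X A) := by
  have hglue := measurable_glue X A
  have hmeas : Measurable fun u => (K u).map fun w => glue X A (u, w) := by
    have : (fun u => (K u).map fun w => glue X A (u, w)) =
        fun u => ((Kernel.id ×ₖ K).map (glue X A)) u := by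
      funext u
      rw [Kernel.map_apply _ hglue, Kernel.prod_apply, Kernel.id_apply,
        Measure.dirac_prod, Measure.map_map hglue measurable_prodMk_left]
      rfl
    rw [this]
    exact Kernel.measurable _
  ext s hs
  rw [hyb, Measure.bind_apply hs hmeas.aemeasurable,
    Measure.map_apply hglue hs, Measure.compProd_apply (hglue hs)]
  congr 1
  funext u
  rw [Measure.map_apply (show Measurable fun w => glue X A (u, w) from
    hglue.comp measurable_prodMk_left) hs]
  rfl

lemma integral_hyb (A : Finset (Fin n)) (P : Measure (∀ j : A, X j))
    [IsProbabilityMeasure P]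
    (K : Kernel (∀ j : A, X j) (∀ j : (Aᶜ : Finset (Fin n)), X j)) [IsMarkovKernel K]
    (γ : (∀ j, X j) → ℝ) (hγ : Measurable γ) (M : ℝ) (hM : ∀ y, |γ y| ≤ M) :
    ∫ y, γ y ∂(hyb X A P K) = ∫ u, Iop X A K γ u ∂P := by
  have hglue := measurable_glue X A
  rw [hyb_eq_map, integral_map hglue.aemeasurable hγ.aestronglyMeasurable]
  have hint : Integrable (fun p => γ (glue X A p)) (P ⊗ₘ K) := by
    refine ⟨(hγ.comp hglue).aestronglyMeasurable, ?_⟩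
    exact HasFiniteIntegral.of_bounded (C := M) (ae_of_all _ fun p => hM _)
  rw [Measure.integral_compProd hint]
  rfl

lemma le_ciSup_image' {ι ι' : Type*} [Nonempty ι] [Nonempty ι'] {s : Set ι} {f : ι → ι'}
    {G : ι' → ℝ} {T : ι → ℝ} (hTG : ∀ x ∈ s, T x = G (f x))
    (h0 : ∃ y, (⨆ _ : y ∈ f '' s, G y) = 0) :
    (⨆ x, ⨆ _ : x ∈ s, T x) ≤ ⨆ y, ⨆ _ : y ∈ f '' s, G y := by
  set g1 : ι' → ℝ := fun y => ⨆ _ : y ∈ f '' s, G y with hg1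
  by_cases hb : BddAbove (Set.range g1)
  · apply ciSup_le
    intro x
    by_cases hx : x ∈ s
    · haveI : Nonempty (x ∈ s) := ⟨hx⟩
      rw [ciSup_const, hTG x hx]
      have hmem : f x ∈ f '' s := ⟨x, hx, rfl⟩
      haveI : Nonempty (f x ∈ f '' s) := ⟨hmem⟩
      have : G (f x) = g1 (f x) := (ciSup_const).symm
      rw [this]
      exact le_ciSup hb _
    · haveI : IsEmpty (x ∈ s) := ⟨hx⟩
      rw [Real.iSup_of_isEmpty]
      obtain ⟨y, hy⟩ := h0
      calc (0:ℝ) = g1 y := hy.symm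
        _ ≤ _ := le_ciSup hb y
  · rw [Real.iSup_of_not_bddAbove hb]
    have hb2 : ¬ BddAbove (Set.range fun x => ⨆ _ : x ∈ s, T x) := by
      intro h
      obtain ⟨b, hbd⟩ := h
      apply hb
      refine ⟨max b 0, ?_⟩
      rintro r ⟨y, rfl⟩
      by_cases hy : y ∈ f '' s
      · obtain ⟨x, hx, rfl⟩ := hy
        haveI : Nonempty (f x ∈ f '' s) := ⟨⟨x, hx, rfl⟩⟩
        haveI : Nonempty (x ∈ s) := ⟨hx⟩
        have h1 : g1 (f x) = T x := by rw [hg1]; simp only; rw [ciSup_const, hTG x hx]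
        have h2 : T x = ⨆ _ : x ∈ s, T x := (ciSup_const).symm
        calc g1 (f x) = T x := h1
          _ ≤ b := h2 ▸ hbd ⟨x, rfl⟩
          _ ≤ max b 0 := le_max_left _ _
      · haveI : IsEmpty (y ∈ f '' s) := ⟨hy⟩
        have : g1 y = 0 := Real.iSup_of_isEmpty _
        rw [this]
        exact le_max_right _ _
    rw [Real.iSup_of_not_bddAbove hb2]

/-- data-processing-type inequality for `Γ`-IPMs: for a Bayesian
network `Q`, a class `Γ^L` of bounded measurable functions, and any probability measure
`P_{i∪Pa(i)}` on the family coordinates,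
`W^{I_{i,Pa(i)}[Γ^L]}(Q_{i∪Pa(i)}, P_{i∪Pa(i)}) ≥ W^{Γ^L}(Q, P̃)`. -/
theorem Iop_data_processing_IPM
    (Pa : Fin n → Finset (Fin n)) (hPa : ∀ i : Fin n, ∀ j ∈ Pa i, j < i)
    (ΓL : Set ((∀ j, X j) → ℝ)) (hΓL : BddMeasClass ΓL)
    (Q : Measure (∀ j, X j)) (hQ : MemPG X Pa Q)
    (K : ∀ i : Fin n,
      Kernel (∀ j : fam Pa i, X j) (∀ j : ((fam Pa i)ᶜ : Finset (Fin n)), X j))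
    (hK : ∀ i, IsMarkovKernel (K i))
    (hdisint : ∀ i, Q = hyb X (fam Pa i) (marg X (fam Pa i) Q) (K i))
    (i : Fin n)
    (Pfam : Measure (∀ j : fam Pa i, X j)) (hPfam : IsProbabilityMeasure Pfam) :
    IPM (Iop X (fam Pa i) (K i) '' ΓL) (marg X (fam Pa i) Q) Pfam ≥
      IPM ΓL Q (hyb X (fam Pa i) Pfam (K i)) := by
  classical
  haveI hQP : IsProbabilityMeasure Q := hQ.1
  haveI hmargP : IsProbabilityMeasure (marg X (fam Pa i) Q) := by
    unfold marg
    exact Measure.isProbabilityMeasure_map (measurable_restr X _).aemeasurable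
  haveI := hK i
  rw [ge_iff_le]
  unfold IPM
  set S := Iop X (fam Pa i) (K i) '' ΓL with hS
  have key : ∀ γ ∈ ΓL,
      (∫ y, γ y ∂Q - ∫ y, γ y ∂(hyb X (fam Pa i) Pfam (K i))) =
      (∫ u, Iop X (fam Pa i) (K i) γ u ∂(marg X (fam Pa i) Q) -
        ∫ u, Iop X (fam Pa i) (K i) γ u ∂Pfam) := by
    intro γ hγ
    obtain ⟨hγm, M, hM⟩ := hΓL γ hγ
    have h1 : ∫ y, γ y ∂Q = ∫ u, Iop X (fam Pa i) (K i) γ u ∂(marg X (fam Pa i) Q) := by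
      conv_lhs => rw [hdisint i]
      exact integral_hyb X _ _ _ γ hγm M hM
    have h2 : ∫ y, γ y ∂(hyb X (fam Pa i) Pfam (K i)) =
        ∫ u, Iop X (fam Pa i) (K i) γ u ∂Pfam :=
      integral_hyb X _ _ _ γ hγm M hM
    rw [h1, h2]
  have h0 : ∃ y, (⨆ _ : y ∈ S, (∫ u, y u ∂(marg X (fam Pa i) Q) - ∫ u, y u ∂Pfam)) = 0 := by
    by_cases hall : ∀ y, y ∈ S
    · refine ⟨fun _ => 0, ?_⟩
      haveI : Nonempty ((fun _ => (0:ℝ)) ∈ S) := ⟨hall _⟩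
      rw [ciSup_const]
      simp
    · push_neg at hall
      obtain ⟨y, hy⟩ := hall
      haveI : IsEmpty (y ∈ S) := ⟨hy⟩
      exact ⟨y, Real.iSup_of_isEmpty _⟩
  exact le_ciSup_image' key h0


end GiGAN
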